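/- Let x_1,…,x_b be distinct nonzero elements of F_q, let 1 ≤ ℓ < k with b − a ≤ ℓ − 1 and a ≥ 2k where a ≤ b. Let C_I ⊆ F_q^b be the code spanned by the rows (x_1^d,…,x_b^d) for 1 ≤ d ≤ ℓ together with the rows (x_1^d,…,x_a^d,0,…,0) for ℓ+1 ≤ d ≤ k. Then dim(C_I²) = 2k − 1 + (b − a). -/

import Mathlib

open Submodule Matrix Polynomial Pointwise

/-- The star (componentwise) product code of two linear codes. -/
noncomputable def starProd {F : Type*} [Field F] {ι : Type*} (A B : Submodule F (ι → F)) :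
    Submodule F (ι → F) :=
  Submodule.span F {w | ∃ a ∈ A, ∃ b ∈ B, w = a * b}

lemma aux_coeff {F : Type*} [Field F] {ι : Type*} [Fintype ι] [DecidableEq ι] (c : ι → F)
    (n : ι → ℕ) (hn : Function.Injective n) (i : ι) :
    (∑ j, c j • ((X : F[X]) ^ n j)).coeff (n i) = c i := by
  rw [Polynomial.finset_sum_coeff]
  have : ∀ j, (c j • ((X : F[X]) ^ n j)).coeff (n i) = if j = i then c j else 0 := by
    intro j
    rw [Polynomial.coeff_smul, Polynomial.coeff_X_pow]
    by_cases h : j = i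
    · simp [h]
    · have hne : ¬ (n i = n j) := fun hh => h (hn hh.symm)
      simp [h, hne]
  simp_rw [this]
  simp

lemma aux_card_filter {b a : ℕ} (hab : a ≤ b) :
    (Finset.univ.filter fun t : Fin b => (t : ℕ) < a).card = a := by
  have key : (Finset.univ.filter fun t : Fin b => (t : ℕ) < a).card = (Finset.range a).card := by
    refine Finset.card_nbij (i := fun t => (t : ℕ)) ?_ ?_ ?_
    · intro t ht
      have ht' : (t : ℕ) < a := by simpa using ht
      simp [Finset.mem_range, ht']
    · intro t ht t' ht' h
      exact Fin.ext h
    · intro i hi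
      simp only [Finset.coe_range, Set.mem_Iio] at hi
      exact ⟨⟨i, lt_of_lt_of_le hi hab⟩, by simp [hi], rfl⟩
  rw [key, Finset.card_range]

lemma aux_card_filter' {b a : ℕ} (hab : a ≤ b) :
    (Finset.univ.filter fun t : Fin b => ¬ (t : ℕ) < a).card = b - a := by
  have h := Finset.card_filter_add_card_filter_not (s := (Finset.univ : Finset (Fin b)))
    (p := fun t : Fin b => (t : ℕ) < a)
  rw [aux_card_filter hab] at h
  simp only [Finset.card_univ, Fintype.card_fin] at h
  omega

lemma aux_star {F : Type*} [Field F] {ι : Type*} (A : Submodule F (ι → F)) (S : Set (ι → F))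
    (hA : A = Submodule.span F S) : starProd A A = Submodule.span F (S * S) := by
  have h1 : {w | ∃ a ∈ A, ∃ b ∈ A, w = a * b} = (A : Set (ι → F)) * (A : Set (ι → F)) := by
    ext w
    simp only [Set.mem_mul, Set.mem_setOf_eq, SetLike.mem_coe]
    constructor
    · rintro ⟨u, hu, v, hv, rfl⟩; exact ⟨u, hu, v, hv, rfl⟩
    · rintro ⟨u, hu, v, hv, rfl⟩; exact ⟨u, hu, v, hv, rfl⟩
  rw [starProd, h1, ← Submodule.mul_eq_span_mul_set, hA, Submodule.span_mul_span]

/-- Restriction of the Bogdanov-Lee public code: the code of length `b` spanned by the rows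
`(x₁^d, …, x_b^d)` for `1 ≤ d ≤ ℓ` and `(x₁^d, …, x_a^d, 0, …, 0)` for `ℓ+1 ≤ d ≤ k`.
If `|J| = b - a ≤ ℓ - 1` and `a = |I| - |J| ≥ 2k`, then `dim C_I² = 2k - 1 + |J|`. -/
theorem stmt19 {F : Type*} [Field F] [Fintype F] {a b k l : ℕ}
    (hab : a ≤ b) (hl : 1 ≤ l) (hlk : l < k) (hJ : b - a ≤ l - 1) (ha2k : 2 * k ≤ a)
    (x : Fin b → F) (hx : Function.Injective x) (hx0 : ∀ t, x t ≠ 0)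
    (CI : Submodule F (Fin b → F))
    (hCI : CI = Submodule.span F
      {w | (∃ d, 1 ≤ d ∧ d ≤ l ∧ w = fun t => x t ^ d) ∨
           (∃ d, l + 1 ≤ d ∧ d ≤ k ∧
             w = fun t : Fin b => if (t : ℕ) < a then x t ^ d else 0)}) :
    Module.finrank F ↥(starProd CI CI) = 2 * k - 1 + (b - a) := by
  classical
  set j := b - a with hjdef
  set m := 2 * l + 1 - j with hmdef
  have hjl : j + 1 ≤ l := by omega
  have hm : m + j = 2 * l + 1 := by omega
  have hml : l + 2 ≤ m := by omega
  set Φf : ℕ → (Fin b → F) := fun d => fun t => x t ^ d with hΦf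
  set Φt : ℕ → (Fin b → F) := fun d => fun t : Fin b => if (t : ℕ) < a then x t ^ d else 0 with hΦt
  set S : Set (Fin b → F) :=
    {w | (∃ d, 1 ≤ d ∧ d ≤ l ∧ w = Φf d) ∨ (∃ d, l + 1 ≤ d ∧ d ≤ k ∧ w = Φt d)} with hS
  have hCI' : CI = Submodule.span F S := hCI
  set N1 := 2 * l - 1 with hN1
  set N2 := 2 * k - 2 * l + j with hN2
  set v : (Fin N1 ⊕ Fin N2) → (Fin b → F) :=
    Sum.elim (fun i : Fin N1 => Φf ((i : ℕ) + 2)) (fun i : Fin N2 => Φt (m + (i : ℕ))) with hv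
  clear_value N1 N2 m j
  -- product identities
  have Pff : ∀ d e : ℕ, Φf d * Φf e = Φf (d + e) := by
    intro d e; funext t; simp [hΦf, pow_add]
  have Pft : ∀ d e : ℕ, Φf d * Φt e = Φt (d + e) := by
    intro d e; funext t; by_cases hta : (t : ℕ) < a <;> simp [hΦf, hΦt, hta, pow_add]
  have Ptf : ∀ d e : ℕ, Φt d * Φf e = Φt (d + e) := by
    intro d e; funext t; by_cases hta : (t : ℕ) < a <;> simp [hΦf, hΦt, hta, pow_add]
  have Ptt : ∀ d e : ℕ, Φt d * Φt e = Φt (d + e) := by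
    intro d e; funext t; by_cases hta : (t : ℕ) < a <;> simp [hΦt, hta, pow_add]
  -- membership lemmas
  have L1 : ∀ d : ℕ, 2 ≤ d → d ≤ 2 * l → Φf d ∈ Submodule.span F (Set.range v) := by
    intro d h2 h2l
    have heq : v (Sum.inl ⟨d - 2, by omega⟩) = Φf d := by
      show Φf ((d - 2) + 2) = Φf d
      rw [Nat.sub_add_cancel h2]
    exact heq ▸ Submodule.subset_span (Set.mem_range_self _)
  have L2 : ∀ d : ℕ, m ≤ d → d ≤ 2 * k → Φt d ∈ Submodule.span F (Set.range v) := by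
    intro d h2 h2k
    have heq : v (Sum.inr ⟨d - m, by omega⟩) = Φt d := by
      show Φt (m + (d - m)) = Φt d
      rw [Nat.add_sub_cancel' h2]
    exact heq ▸ Submodule.subset_span (Set.mem_range_self _)
  have L3 : ∀ d : ℕ, l + 2 ≤ d → d < m → Φt d ∈ Submodule.span F (Set.range v) := by
    intro d hd1 hd2
    by_cases hba : b ≤ a
    · have : Φt d = Φf d := by
        funext t
        have : (t : ℕ) < a := lt_of_lt_of_le t.isLt hba
        simp [hΦt, hΦf, this]
      rw [this]; exact L1 d (by omega) (by omega)
    · have hj1 : 1 ≤ j := by omega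
      set s : Finset (Fin b) := Finset.univ.filter (fun t : Fin b => ¬ (t : ℕ) < a) with hs
      have hsc : s.card = j := by rw [hjdef]; exact aux_card_filter' hab
      have hinj : Set.InjOn x s := fun u _ w _ h => hx h
      set h : F[X] := Lagrange.interpolate s x (fun t => x t ^ d / x t ^ m) with hh
      have hdeg : h.natDegree < j := by
        by_cases h0 : h = 0
        · simp [h0]; omega
        · rw [← hsc]
          exact (Polynomial.natDegree_lt_iff_degree_lt h0).2 (Lagrange.degree_interpolate_lt _ hinj)
      have key : Φt d = Φf d -
          ∑ i ∈ Finset.range j, h.coeff i • (Φf (m + i) - Φt (m + i)) := by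
        funext t
        by_cases hta : (t : ℕ) < a
        · simp [hΦt, hΦf, hta, Finset.sum_apply]
        · have hts : t ∈ s := by
            simp only [hs, Finset.mem_filter, Finset.mem_univ, true_and]
            exact hta
          have heval : Polynomial.eval (x t) h = x t ^ d / x t ^ m :=
            Lagrange.eval_interpolate_at_node _ hinj hts
          rw [Polynomial.eval_eq_sum_range' hdeg] at heval
          have hxm : x t ^ m ≠ 0 := pow_ne_zero _ (hx0 t)
          simp only [hΦt, hΦf, hta, if_false, Pi.sub_apply, Finset.sum_apply, Pi.smul_apply,
            smul_eq_mul, mul_sub, mul_zero, sub_zero]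
          have : ∑ i ∈ Finset.range j, h.coeff i * x t ^ (m + i)
              = x t ^ m * ∑ i ∈ Finset.range j, h.coeff i * x t ^ i := by
            rw [Finset.mul_sum]
            refine Finset.sum_congr rfl fun i _ => ?_
            rw [pow_add]
            ring
          rw [this, heval]
          field_simp
          ring
      rw [key]
      refine sub_mem (L1 d (by omega) (by omega)) (Submodule.sum_mem _ fun i hi => ?_)
      have hij : i < j := Finset.mem_range.1 hi
      exact Submodule.smul_mem _ _
        (sub_mem (L1 (m + i) (by omega) (by omega)) (L2 (m + i) (by omega) (by omega)))
  have L4 : ∀ d : ℕ, l + 2 ≤ d → d ≤ 2 * k → Φt d ∈ Submodule.span F (Set.range v) := by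
    intro d h1 h2
    rcases lt_or_ge d m with h | h
    · exact L3 d h1 h
    · exact L2 d h h2
  -- the span identity
  have hspan : starProd CI CI = Submodule.span F (Set.range v) := by
    rw [aux_star CI S hCI']
    apply le_antisymm
    · rw [Submodule.span_le]
      rintro w hw
      rw [Set.mem_mul] at hw
      obtain ⟨u, hu, u', hu', rfl⟩ := hw
      rcases hu with ⟨d, hd1, hd2, rfl⟩ | ⟨d, hd1, hd2, rfl⟩ <;>
        rcases hu' with ⟨e, he1, he2, rfl⟩ | ⟨e, he1, he2, rfl⟩
      · rw [Pff]; exact L1 _ (by omega) (by omega)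
      · rw [Pft]; exact L4 _ (by omega) (by omega)
      · rw [Ptf]; exact L4 _ (by omega) (by omega)
      · rw [Ptt]; exact L4 _ (by omega) (by omega)
    · rw [Submodule.span_le]
      rintro w ⟨i, rfl⟩
      apply Submodule.subset_span
      rw [Set.mem_mul]
      cases i with
      | inl i =>
        have hiN : (i : ℕ) < N1 := i.isLt
        obtain ⟨d, e, hd1, hd2, he1, he2, hde⟩ :
            ∃ d e : ℕ, 1 ≤ d ∧ d ≤ l ∧ 1 ≤ e ∧ e ≤ l ∧ d + e = (i : ℕ) + 2 := by
          rcases le_or_gt ((i : ℕ) + 2) (l + 1) with hc | hc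
          · exact ⟨1, (i : ℕ) + 1, by omega, by omega, by omega, by omega, by omega⟩
          · exact ⟨(i : ℕ) + 2 - l, l, by omega, by omega, by omega, by omega, by omega⟩
        refine ⟨Φf d, Or.inl ⟨d, hd1, hd2, rfl⟩, Φf e, Or.inl ⟨e, he1, he2, rfl⟩, ?_⟩
        rw [Pff, hde]
        simp [hv]
      | inr i =>
        have hiN : (i : ℕ) < N2 := i.isLt
        have hD1 : l + 2 ≤ m + (i : ℕ) := by omega
        have hD2 : m + (i : ℕ) ≤ 2 * k := by omega
        rcases le_or_gt (m + (i : ℕ)) (l + k) with hc | hc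
        · obtain ⟨d, e, hd1, hd2, he1, he2, hde⟩ :
              ∃ d e : ℕ, 1 ≤ d ∧ d ≤ l ∧ l + 1 ≤ e ∧ e ≤ k ∧ d + e = m + (i : ℕ) := by
            rcases le_or_gt (m + (i : ℕ)) (2 * l + 1) with hc2 | hc2
            · exact ⟨m + (i : ℕ) - l - 1, l + 1, by omega, by omega, by omega, by omega, by omega⟩
            · exact ⟨l, m + (i : ℕ) - l, by omega, by omega, by omega, by omega, by omega⟩
          refine ⟨Φf d, Or.inl ⟨d, hd1, hd2, rfl⟩, Φt e, Or.inr ⟨e, he1, he2, rfl⟩, ?_⟩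
          rw [Pft, hde]
          simp [hv]
        · obtain ⟨d, e, hd1, hd2, he1, he2, hde⟩ :
              ∃ d e : ℕ, l + 1 ≤ d ∧ d ≤ k ∧ l + 1 ≤ e ∧ e ≤ k ∧ d + e = m + (i : ℕ) := by
            exact ⟨m + (i : ℕ) - k, k, by omega, by omega, by omega, by omega, by omega⟩
          refine ⟨Φt d, Or.inr ⟨d, hd1, hd2, rfl⟩, Φt e, Or.inr ⟨e, he1, he2, rfl⟩, ?_⟩
          rw [Ptt, hde]
          simp [hv]
  -- linear independence
  have hli : LinearIndependent F v := by
    rw [Fintype.linearIndependent_iff]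
    intro c hc
    set p : F[X] := ∑ i : Fin N1, c (Sum.inl i) • (X : F[X]) ^ ((i : ℕ) + 2) with hp
    set r : F[X] := ∑ i : Fin N2, c (Sum.inr i) • (X : F[X]) ^ (m + (i : ℕ)) with hr
    have hpe : ∀ y : F, p.eval y = ∑ i : Fin N1, c (Sum.inl i) * y ^ ((i : ℕ) + 2) := by
      intro y
      simp [hp, Polynomial.eval_finset_sum, smul_eq_mul]
    have hre : ∀ y : F, r.eval y = ∑ i : Fin N2, c (Sum.inr i) * y ^ (m + (i : ℕ)) := by
      intro y
      simp [hr, Polynomial.eval_finset_sum, smul_eq_mul]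
    have hcoord : ∀ t : Fin b,
        (∑ i : Fin N1, c (Sum.inl i) * x t ^ ((i : ℕ) + 2)) +
        (∑ i : Fin N2, c (Sum.inr i) * (if (t : ℕ) < a then x t ^ (m + (i : ℕ)) else 0)) = 0 := by
      intro t
      have h0 := congrFun hc t
      simp only [Finset.sum_apply, Pi.smul_apply, smul_eq_mul, Pi.zero_apply] at h0
      rw [Fintype.sum_sum_type] at h0
      simpa [hv, hΦf, hΦt] using h0
    have hevalp : ∀ t : Fin b, ¬ (t : ℕ) < a → p.eval (x t) = 0 := by
      intro t ht
      have := hcoord t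
      simp only [ht, if_false, mul_zero, Finset.sum_const_zero, add_zero] at this
      rw [hpe]; exact this
    have hevalpr : ∀ t : Fin b, (t : ℕ) < a → (p + r).eval (x t) = 0 := by
      intro t ht
      have := hcoord t
      simp only [ht, if_true] at this
      rw [Polynomial.eval_add, hpe, hre]
      exact this
    have heval0 : (p + r).eval 0 = 0 := by
      rw [Polynomial.eval_add, hpe, hre]
      rw [Finset.sum_eq_zero fun i _ => by rw [zero_pow (by omega), mul_zero],
        Finset.sum_eq_zero fun i _ => by rw [zero_pow (by omega), mul_zero], add_zero]
    have hdp : p.natDegree ≤ 2 * l := by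
      refine Polynomial.natDegree_sum_le_of_forall_le _ _ fun i _ => ?_
      refine le_trans (Polynomial.natDegree_smul_le _ _) ?_
      rw [Polynomial.natDegree_X_pow]
      have := i.isLt
      omega
    have hdr : r.natDegree ≤ 2 * k := by
      refine Polynomial.natDegree_sum_le_of_forall_le _ _ fun i _ => ?_
      refine le_trans (Polynomial.natDegree_smul_le _ _) ?_
      rw [Polynomial.natDegree_X_pow]
      have := i.isLt
      omega
    have hdpr : (p + r).natDegree ≤ 2 * k :=
      le_trans (Polynomial.natDegree_add_le _ _) (by omega)
    -- p + r = 0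
    set s0 : Finset F :=
      insert (0 : F) (Finset.image x (Finset.univ.filter fun t : Fin b => (t : ℕ) < a)) with hs0
    have hs0card : s0.card = a + 1 := by
      rw [hs0, Finset.card_insert_of_notMem, Finset.card_image_of_injective _ hx,
        aux_card_filter hab]
      intro h0
      obtain ⟨t, ht, ht0⟩ := Finset.mem_image.1 h0
      exact hx0 t ht0
    have hpr0 : p + r = 0 := by
      refine Polynomial.eq_zero_of_natDegree_lt_card_of_eval_eq_zero' _ s0 ?_ ?_
      · intro y hy
        rw [hs0, Finset.mem_insert] at hy
        rcases hy with rfl | hy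
        · exact heval0
        · obtain ⟨t, ht, rfl⟩ := Finset.mem_image.1 hy
          exact hevalpr t (by simpa using ht)
      · rw [hs0card]; omega
    have hrp : r = -p := by
      have := hpr0
      linear_combination this
    have hevalr : ∀ t : Fin b, ¬ (t : ℕ) < a → r.eval (x t) = 0 := by
      intro t ht
      rw [hrp, Polynomial.eval_neg, hevalp t ht, neg_zero]
    set g : F[X] := ∑ i : Fin N2, c (Sum.inr i) • (X : F[X]) ^ (i : ℕ) with hg
    have hrg : r = X ^ m * g := by
      rw [hr, hg, Finset.mul_sum]
      refine Finset.sum_congr rfl fun i _ => ?_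
      rw [mul_smul_comm, ← pow_add]
    have hg0 : g = 0 := by
      by_contra hgne
      have hXm : (X : F[X]) ^ m ≠ 0 := pow_ne_zero _ Polynomial.X_ne_zero
      have hdr' : r.natDegree = m + g.natDegree := by
        rw [hrg, Polynomial.natDegree_mul hXm hgne, Polynomial.natDegree_X_pow]
      have hrd2 : r.natDegree ≤ 2 * l := by
        rw [hrp, Polynomial.natDegree_neg]; exact hdp
      have hgd : g.natDegree < j := by omega
      refine hgne (Polynomial.eq_zero_of_natDegree_lt_card_of_eval_eq_zero' g
        (Finset.image x (Finset.univ.filter fun t : Fin b => ¬ (t : ℕ) < a)) ?_ ?_)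
      · intro y hy
        obtain ⟨t, ht, rfl⟩ := Finset.mem_image.1 hy
        have ht' : ¬ (t : ℕ) < a := by simpa using ht
        have h1 : r.eval (x t) = 0 := hevalr t ht'
        rw [hrg, Polynomial.eval_mul, Polynomial.eval_pow, Polynomial.eval_X] at h1
        exact (mul_eq_zero.1 h1).resolve_left (pow_ne_zero _ (hx0 t))
      · rw [Finset.card_image_of_injective _ hx, aux_card_filter' hab]
        omega
    have hr0 : r = 0 := by rw [hrg, hg0, mul_zero]
    have hp0 : p = 0 := by
      have := hpr0
      rw [hr0, add_zero] at this
      exact this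
    intro i
    cases i with
    | inl i =>
      have hninj : Function.Injective (fun i : Fin N1 => (i : ℕ) + 2) := by
        intro u w h
        simp only [add_left_inj] at h
        exact Fin.ext h
      have := aux_coeff (fun i : Fin N1 => c (Sum.inl i)) (fun i : Fin N1 => (i : ℕ) + 2) hninj i
      rw [← hp, hp0] at this
      simpa using this.symm
    | inr i =>
      have hninj : Function.Injective (fun i : Fin N2 => m + (i : ℕ)) := by
        intro u w h
        simp only [add_right_inj] at h
        exact Fin.ext h
      have := aux_coeff (fun i : Fin N2 => c (Sum.inr i)) (fun i : Fin N2 => m + (i : ℕ)) hninj i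
      rw [← hr, hr0] at this
      simpa using this.symm
  rw [hspan, finrank_span_eq_card hli]
  simp only [Fintype.card_sum, Fintype.card_fin]
  omega
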